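/- Let X be a Polish space, T : X → X a continuous map, and Z ⊆ X a zero-dimensional subset with T(Z) ⊆ Z. Then there exists a set Y with Z ⊆ Y ⊆ X, T(Y) ⊆ Y, such that Y is zero-dimensional and is a Gδ subset of X. -/

import Mathlib

open TopologicalSpace Set EMetric ENNReal


/-- A subset of a topological space is zero-dimensional if the clopen sets of the
subspace topology form a basis. -/
def ZeroDimSubset {X : Type*} [TopologicalSpace X] (Z : Set X) : Prop :=
  TopologicalSpace.IsTopologicalBasis {s : Set Z | IsClopen s}


lemma zeroDimSubset_mono {X : Type*} [TopologicalSpace X] {Z Y : Set X}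
    (hZ : ZeroDimSubset Z) (hYZ : Y ⊆ Z) : ZeroDimSubset Y := by
  refine isTopologicalBasis_of_isOpen_of_nhds (fun u hu => hu.isOpen) ?_
  intro a u ha hu
  obtain ⟨t, ht, rfl⟩ := isOpen_induced_iff.mp hu
  have ht' : IsOpen (Subtype.val ⁻¹' t : Set Z) := ht.preimage continuous_subtype_val
  obtain ⟨v, hv, hav, hvt⟩ := hZ.exists_subset_of_mem_open (a := ⟨a.1, hYZ a.2⟩) ha ht'
  refine ⟨Set.inclusion hYZ ⁻¹' v, hv.preimage (continuous_inclusion hYZ), hav, ?_⟩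
  intro b hb
  exact hvt hb

lemma sep_open {X : Type*} [PseudoEMetricSpace X] {A B : Set X}
    (h1 : Disjoint (closure A) B) (h2 : Disjoint A (closure B)) :
    ∃ V W : Set X, IsOpen V ∧ IsOpen W ∧ A ⊆ V ∧ B ⊆ W ∧ Disjoint V W := by
  refine ⟨{x | infEdist x A < infEdist x B}, {x | infEdist x B < infEdist x A},
    isOpen_lt continuous_infEdist continuous_infEdist,
    isOpen_lt continuous_infEdist continuous_infEdist, ?_, ?_, ?_⟩
  · intro a ha
    have hA : infEdist a A = 0 := infEdist_zero_of_mem ha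
    have hB : infEdist a B ≠ 0 := by
      intro h0
      exact h2.ne_of_mem ha (mem_closure_iff_infEdist_zero.2 h0) rfl
    simpa [hA, pos_iff_ne_zero] using hB
  · intro b hb
    have hB : infEdist b B = 0 := infEdist_zero_of_mem hb
    have hA : infEdist b A ≠ 0 := by
      intro h0
      exact h1.ne_of_mem (mem_closure_iff_infEdist_zero.2 h0) hb rfl
    simpa [hB, pos_iff_ne_zero] using hA
  · rw [Set.disjoint_left]
    intro x hx hx'
    simp only [Set.mem_setOf_eq] at hx hx'
    exact lt_asymm hx hx'

lemma closure_inter_subset_val {X : Type*} [TopologicalSpace X] {Z : Set X} {w : Set Z}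
    (hw : IsClosed w) : closure (Subtype.val '' w) ∩ Z ⊆ Subtype.val '' w := by
  obtain ⟨C, hC, hCw⟩ := isClosed_induced_iff.mp hw
  have hsub : Subtype.val '' w ⊆ C := by
    rintro _ ⟨y, hy, rfl⟩
    rw [← hCw] at hy
    exact hy
  rintro x ⟨hxc, hxZ⟩
  have hxC : x ∈ C := closure_minimal hsub hC hxc
  refine ⟨⟨x, hxZ⟩, ?_, rfl⟩
  rw [← hCw]
  exact hxC

lemma diff_eq_image_compl {X : Type*} [TopologicalSpace X] {Z : Set X} (u : Set Z) :
    Z \ Subtype.val '' u = Subtype.val '' uᶜ := by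
  ext x
  constructor
  · rintro ⟨hxZ, hxn⟩
    exact ⟨⟨x, hxZ⟩, fun h => hxn ⟨⟨x, hxZ⟩, h, rfl⟩, rfl⟩
  · rintro ⟨y, hy, rfl⟩
    refine ⟨y.2, fun h => ?_⟩
    obtain ⟨y', hy', he⟩ := h
    have : y' = y := Subtype.val_injective he
    exact hy (this ▸ hy')

theorem exists_zeroDim_Gdelta {X : Type*} [TopologicalSpace X] [PolishSpace X]
    (Z : Set X) (hZ : ZeroDimSubset Z) :
    ∃ G : Set X, Z ⊆ G ∧ ZeroDimSubset G ∧ IsGδ G := by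
  letI := upgradeIsCompletelyMetrizable X
  set δ : ℕ → ℝ≥0∞ := fun k => ((k : ℝ≥0∞) + 1)⁻¹ with hδdef
  have hδpos : ∀ k, 0 < δ k := fun k =>
    ENNReal.inv_pos.2 (ENNReal.add_lt_top.2 ⟨ENNReal.natCast_lt_top k, ENNReal.one_lt_top⟩).ne
  -- covering by small clopen sets
  have cover : ∀ (k : ℕ) (z : Z), ∃ u : Set Z, IsClopen u ∧ z ∈ u ∧
      EMetric.diam (Subtype.val '' u) ≤ δ k := by
    intro k z
    have hball : IsOpen (Subtype.val ⁻¹' (EMetric.ball (z : X) (δ k / 2)) : Set Z) :=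
      EMetric.isOpen_ball.preimage continuous_subtype_val
    have hz : z ∈ (Subtype.val ⁻¹' (EMetric.ball (z : X) (δ k / 2)) : Set Z) := by
      simp only [Set.mem_preimage, EMetric.mem_ball, edist_self]
      exact Metric.mem_eball_self (ENNReal.div_pos (hδpos k).ne' (ENNReal.ofNat_ne_top (n := 2)))
    obtain ⟨u, hu, hzu, hsub⟩ := hZ.exists_subset_of_mem_open hz hball
    refine ⟨u, hu, hzu, ?_⟩
    calc EMetric.diam (Subtype.val '' u) ≤ EMetric.diam (EMetric.ball (z : X) (δ k / 2)) := by
          apply EMetric.diam_mono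
          rintro _ ⟨y, hy, rfl⟩
          exact hsub hy
      _ ≤ 2 * (δ k / 2) := EMetric.diam_ball
      _ ≤ δ k := ENNReal.mul_div_le
  -- index of small clopen sets
  let I := Σ k : ℕ, {u : Set Z // IsClopen u ∧ EMetric.diam (Subtype.val '' u) ≤ δ k}
  let E : I → Set X := fun i => Subtype.val '' (i.2.1 : Set Z)
  -- separating neighborhoods
  have key : ∀ i : I, ∃ V W : Set X, IsOpen V ∧ IsOpen W ∧ E i ⊆ V ∧ (Z \ E i) ⊆ W ∧
      Disjoint V W ∧ EMetric.diam V ≤ 3 * δ i.1 := by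
    intro i
    have hu : IsClopen (i.2.1 : Set Z) := i.2.2.1
    have hEu : E i = Subtype.val '' (i.2.1 : Set Z) := rfl
    have h1 : Disjoint (closure (E i)) (Z \ E i) := by
      rw [Set.disjoint_left]
      rintro x hx ⟨hxZ, hxn⟩
      exact hxn (closure_inter_subset_val hu.isClosed ⟨hx, hxZ⟩)
    have h2 : Disjoint (E i) (closure (Z \ E i)) := by
      rw [Set.disjoint_left]
      rintro x hx hx'
      rw [hEu, diff_eq_image_compl] at hx'
      have := closure_inter_subset_val (hu.compl.isClosed) ⟨hx', by
        obtain ⟨y, _, rfl⟩ := hx; exact y.2⟩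
      rw [← diff_eq_image_compl] at this
      exact this.2 hx
    obtain ⟨V₀, W, hVo, hWo, hEV, hZW, hdisj⟩ := sep_open h1 h2
    refine ⟨V₀ ∩ ⋃ y ∈ E i, EMetric.ball y (δ i.1), W, hVo.inter (isOpen_biUnion fun _ _ =>
      EMetric.isOpen_ball), hWo, ?_, hZW, hdisj.mono_left Set.inter_subset_left, ?_⟩
    · intro x hx
      exact ⟨hEV hx, Set.mem_biUnion hx (Metric.mem_eball_self (hδpos i.1))⟩
    · apply EMetric.diam_le
      rintro p ⟨-, hp⟩ q ⟨-, hq⟩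
      obtain ⟨y₁, hy₁, hpy⟩ := Set.mem_iUnion₂.mp hp
      obtain ⟨y₂, hy₂, hqy⟩ := Set.mem_iUnion₂.mp hq
      have hdi : edist y₁ y₂ ≤ δ i.1 := le_trans (edist_le_diam_of_mem hy₁ hy₂) i.2.2.2
      calc edist p q ≤ edist p y₁ + edist y₁ y₂ + edist y₂ q := edist_triangle4 p y₁ y₂ q
        _ ≤ δ i.1 + δ i.1 + δ i.1 := by
            refine add_le_add (add_le_add hpy.le hdi) ?_
            rw [edist_comm]
            exact hqy.le
        _ = 3 * δ i.1 := by ring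
  choose V W hVo hWo hEV hZW hdisj hdiam using key
  -- countable subcovers
  have hcov : ∀ k : ℕ, Z ⊆ ⋃ j : {i : I // i.1 = k}, V j.1 := by
    intro k z hz
    obtain ⟨u, hu, hzu, hud⟩ := cover k ⟨z, hz⟩
    have : z ∈ E ⟨k, u, hu, hud⟩ := ⟨⟨z, hz⟩, hzu, rfl⟩
    exact Set.mem_iUnion.2 ⟨⟨⟨k, u, hu, hud⟩, rfl⟩, hEV _ this⟩
  choose T hTc hTU using fun k : ℕ =>
    TopologicalSpace.isOpen_iUnion_countable (fun j : {i : I // i.1 = k} => V j.1)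
      (fun j => hVo j.1)
  let S : ℕ → Set I := fun k => Subtype.val '' T k
  have hSc : ∀ k, (S k).Countable := fun k => (hTc k).image _
  have hSk : ∀ k, ∀ i ∈ S k, i.1 = k := by
    rintro k i ⟨j, _, rfl⟩
    exact j.2
  have hUS : ∀ k, (⋃ i ∈ S k, V i) = ⋃ j : {i : I // i.1 = k}, V j.1 := by
    intro k
    rw [Set.biUnion_image]
    exact hTU k
  refine ⟨⋂ k, ((⋃ i ∈ S k, V i) ∩ ⋂ i ∈ S k, (V i ∪ W i)), ?_, ?_, ?_⟩
  · -- Z ⊆ G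
    intro z hz
    refine Set.mem_iInter.2 fun k => ⟨?_, ?_⟩
    · rw [hUS k]
      exact hcov k hz
    · refine Set.mem_iInter₂.2 fun i _ => ?_
      by_cases hzE : z ∈ E i
      · exact Or.inl (hEV i hzE)
      · exact Or.inr (hZW i ⟨hz, hzE⟩)
  · -- zero-dimensional
    set G := ⋂ k, ((⋃ i ∈ S k, V i) ∩ ⋂ i ∈ S k, (V i ∪ W i)) with hGdef
    refine isTopologicalBasis_of_isOpen_of_nhds (fun u hu => hu.isOpen) ?_
    intro a u ha hu
    obtain ⟨t, ht, rfl⟩ := isOpen_induced_iff.mp hu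
    obtain ⟨ε, εpos, hball⟩ := EMetric.isOpen_iff.mp ht _ ha
    have hε3 : ε / 3 ≠ 0 := by
      simp [ENNReal.div_eq_zero_iff, εpos.ne']
    obtain ⟨n, hn⟩ := ENNReal.exists_inv_nat_lt hε3
    have hδn : δ n < ε / 3 := lt_of_le_of_lt (ENNReal.inv_le_inv.2 (by
      exact_mod_cast le_self_add)) hn
    have h3δ : 3 * δ n < ε := by
      calc 3 * δ n < 3 * (ε / 3) := ENNReal.mul_lt_mul_right (by norm_num) (by norm_num) hδn
        _ ≤ ε := ENNReal.mul_div_le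
    have haG : (a : X) ∈ ⋂ k, ((⋃ i ∈ S k, V i) ∩ ⋂ i ∈ S k, (V i ∪ W i)) := a.2
    rw [Set.mem_iInter] at haG
    obtain ⟨hacov, hasep⟩ := haG n
    obtain ⟨i, hiS, haV⟩ := Set.mem_iUnion₂.mp hacov
    have hin : i.1 = n := hSk n i hiS
    -- the clopen set
    refine ⟨Subtype.val ⁻¹' V i, ⟨?_, (hVo i).preimage continuous_subtype_val⟩, haV, ?_⟩
    · -- closed
      rw [← isOpen_compl_iff]
      have hcompl : (Subtype.val ⁻¹' V i : Set G)ᶜ = Subtype.val ⁻¹' W i := by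
        ext b
        simp only [Set.mem_compl_iff, Set.mem_preimage]
        constructor
        · intro hb
          have hbG : (b : X) ∈ ⋂ k, ((⋃ i ∈ S k, V i) ∩ ⋂ i ∈ S k, (V i ∪ W i)) := b.2
          rw [Set.mem_iInter] at hbG
          have := Set.mem_iInter₂.mp (hbG n).2 i hiS
          exact this.resolve_left hb
        · intro hb hb'
          exact (hdisj i).ne_of_mem hb' hb rfl
      rw [hcompl]
      exact (hWo i).preimage continuous_subtype_val
    · intro b hb
      have : edist (b : X) (a : X) ≤ 3 * δ n := by
        rw [← hin]
        exact le_trans (edist_le_diam_of_mem hb haV) (hdiam i)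
      exact hball (EMetric.mem_ball.2 (lt_of_le_of_lt this h3δ))
  · -- Gδ
    refine IsGδ.iInter fun k => IsGδ.inter ?_ ?_
    · exact (isOpen_biUnion fun i _ => hVo i).isGδ
    · exact IsGδ.biInter (hSc k) fun i _ => ((hVo i).union (hWo i)).isGδ

theorem zero_dim_invariant_Gdelta_extension
    {X : Type*} [TopologicalSpace X] [PolishSpace X]
    (T : X → X) (hT : Continuous T)
    (Z : Set X) (hZ : ZeroDimSubset Z) (hTZ : T '' Z ⊆ Z) :
    ∃ Y : Set X, Z ⊆ Y ∧ T '' Y ⊆ Y ∧ ZeroDimSubset Y ∧ IsGδ Y := by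
  obtain ⟨G, hZG, hGzd, hGδ⟩ := exists_zeroDim_Gdelta Z hZ
  have hiter : ∀ n : ℕ, ∀ z ∈ Z, T^[n] z ∈ Z := by
    intro n
    induction n with
    | zero => intro z hz; simpa using hz
    | succ n ih =>
      intro z hz
      rw [Function.iterate_succ_apply']
      exact hTZ ⟨T^[n] z, ih z hz, rfl⟩
  refine ⟨⋂ n : ℕ, T^[n] ⁻¹' G, ?_, ?_, ?_, ?_⟩
  · intro z hz
    exact Set.mem_iInter.2 fun n => hZG (hiter n z hz)
  · rintro _ ⟨x, hx, rfl⟩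
    refine Set.mem_iInter.2 fun n => ?_
    have := Set.mem_iInter.mp hx (n + 1)
    rwa [Set.mem_preimage, Function.iterate_succ_apply] at this
  · refine zeroDimSubset_mono hGzd ?_
    intro x hx
    have := Set.mem_iInter.mp hx 0
    simpa using this
  · refine IsGδ.iInter fun n => ?_
    obtain ⟨F, hFo, hFc, hFe⟩ := hGδ
    rw [hFe, Set.sInter_eq_biInter, Set.preimage_iInter₂]
    exact IsGδ.biInter hFc fun t ht => ((hFo t ht).preimage (hT.iterate n)).isGδ
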